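/- For additively separable hedonic games with arbitrary real weights (declaration domain D = all weight profiles), every optimal mechanism is non-obviously manipulable. -/
import Mathlib


noncomputable section

open Finset

/-- A partition of the agents `Fin n`, given by the block (coalition) of each agent. -/
structure HGPartition (n : ℕ) where
  block : Fin n → Finset (Fin n)
  mem_block : ∀ i, i ∈ block i
  block_eq : ∀ i j, j ∈ block i → block j = block i

/-- ASHG utility of an agent with score row `wi` for a coalition `C` containing her. -/
def uA {n : ℕ} (wi : Fin n → ℝ) (C : Finset (Fin n)) : ℝ :=
  ∑ j ∈ C, wi j

/-- FHG utility of an agent with score row `wi` for a coalition `C` containing her. -/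
def uF {n : ℕ} (wi : Fin n → ℝ) (C : Finset (Fin n)) : ℝ :=
  (∑ j ∈ C, wi j) / C.card

/-- Utilitarian social welfare in ASHGs. -/
def swA {n : ℕ} (w : Fin n → Fin n → ℝ) (π : HGPartition n) : ℝ :=
  ∑ i, uA (w i) (π.block i)

/-- Utilitarian social welfare in FHGs. -/
def swF {n : ℕ} (w : Fin n → Fin n → ℝ) (π : HGPartition n) : ℝ :=
  ∑ i, uF (w i) (π.block i)

/-- A weight profile has zero scores on the diagonal. -/
def ZeroDiag {n : ℕ} (w : Fin n → Fin n → ℝ) : Prop := ∀ i, w i i = 0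

/-- The set of ASHG utilities (w.r.t. true row `wi`) agent `i` can obtain under `M`
when declaring `di`, as the others' declarations range over the domain. -/
def utilSetA {n : ℕ} (M : (Fin n → Fin n → ℝ) → HGPartition n)
    (i : Fin n) (wi di : Fin n → ℝ) : Set ℝ :=
  {x : ℝ | ∃ d : Fin n → Fin n → ℝ, ZeroDiag d ∧ d i = di ∧ x = uA wi ((M d).block i)}

/-- Non-obvious manipulability for ASHGs with arbitrary weights. -/
def NOM_A {n : ℕ} (M : (Fin n → Fin n → ℝ) → HGPartition n) : Prop :=
  ∀ (i : Fin n) (wi di : Fin n → ℝ), wi i = 0 → di i = 0 →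
    sSup (utilSetA M i wi di) ≤ sSup (utilSetA M i wi wi) ∧
    sInf (utilSetA M i wi di) ≤ sInf (utilSetA M i wi wi)

/-- A mechanism is optimal if it always outputs a social-welfare maximizing partition. -/
def OptimalA {n : ℕ} (M : (Fin n → Fin n → ℝ) → HGPartition n) : Prop :=
  ∀ d : Fin n → Fin n → ℝ, ZeroDiag d →
    ∀ π : HGPartition n, swA d π ≤ swA d (M d)

lemma HG_mem_block_comm {n : ℕ} (π : HGPartition n) (i j : Fin n) :
    j ∈ π.block i ↔ i ∈ π.block j := by
  constructor <;> intro h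
  · rw [π.block_eq i j h]; exact π.mem_block i
  · rw [π.block_eq j i h]; exact π.mem_block j

lemma HG_sum_abs_bound {n : ℕ} (r : Fin n → ℝ) (C : Finset (Fin n)) :
    |∑ j ∈ C, r j| ≤ ∑ j, |r j| :=
  le_trans (Finset.abs_sum_le_sum_abs _ _)
    (Finset.sum_le_sum_of_subset_of_nonneg (Finset.subset_univ C)
      (fun j _ _ => abs_nonneg _))

lemma HG_key {n : ℕ} (M : (Fin n → Fin n → ℝ) → HGPartition n) (hM : OptimalA M)
    (i : Fin n) (r : Fin n → ℝ) (hr : r i = 0) (T : Finset (Fin n)) (hiT : i ∉ T) :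
    ∃ d : Fin n → Fin n → ℝ, ZeroDiag d ∧ d i = r ∧ (M d).block i = insert i T := by
  set L : ℝ := 1 + 2 * ∑ j, |r j| with hLdef
  have hsum_nonneg : (0:ℝ) ≤ ∑ j, |r j| := Finset.sum_nonneg fun j _ => abs_nonneg _
  have hL1 : (1:ℝ) ≤ L := by simp only [hLdef]; linarith
  set d : Fin n → Fin n → ℝ := fun j k =>
    if j = i then r k else if k = i then (if j ∈ T then L else -L) else 0 with hd
  have hZ : ZeroDiag d := by
    intro j
    by_cases hj : j = i
    · simp [hd, hj, hr]
    · simp [hd, hj]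
  have hdi : d i = r := by funext k; simp [hd]
  have hval : ∀ π : HGPartition n,
      swA d π = (∑ k ∈ π.block i, r k)
        + ∑ j ∈ (π.block i).erase i, (if j ∈ T then L else -L) := by
    intro π
    have h1 : swA d π = uA (d i) (π.block i) + ∑ j ∈ univ.erase i, uA (d j) (π.block j) := by
      rw [swA, ← Finset.add_sum_erase _ _ (mem_univ i)]
    rw [h1, hdi]
    congr 1
    have h2 : ∀ j ∈ univ.erase i, uA (d j) (π.block j)
        = if j ∈ π.block i then (if j ∈ T then L else -L) else 0 := by
      intro j hj
      have hji : j ≠ i := (Finset.mem_erase.mp hj).1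
      have : uA (d j) (π.block j)
          = ∑ k ∈ π.block j, (if k = i then (if j ∈ T then L else -L) else 0) := by
        unfold uA; apply Finset.sum_congr rfl; intro k _; simp [hd, hji]
      rw [this, Finset.sum_ite_eq' (π.block j) i]
      simp only [HG_mem_block_comm π j i]
    rw [Finset.sum_congr rfl h2, Finset.sum_ite_mem]
    congr 1
    ext j
    simp [Finset.mem_erase, Finset.mem_inter, and_comm]
  -- the target partition
  set pstar : HGPartition n := {
    block := fun j => if j ∈ insert i T then insert i T else {j}
    mem_block := by intro j; by_cases h : j ∈ insert i T <;> simp [h]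
    block_eq := by
      intro a b hb
      by_cases ha : a ∈ insert i T
      · simp only [ha, if_true] at hb ⊢; simp [hb]
      · simp only [ha, if_false, Finset.mem_singleton] at hb; subst hb; rfl } with hpstar
  have hBi : pstar.block i = insert i T := by
    simp [hpstar]
  have hopt := hM d hZ pstar
  rw [hval pstar, hval (M d), hBi] at hopt
  set B := (M d).block i with hB
  have hiB : i ∈ B := (M d).mem_block i
  have hsplit : ∑ j ∈ B.erase i, (if j ∈ T then L else -L)
      = ((B.erase i) ∩ T).card * L - ((B.erase i) \ T).card * L := by
    rw [Finset.sum_ite, Finset.sum_const, Finset.sum_const,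
        Finset.filter_mem_eq_inter]
    have : B.erase i \ T = (B.erase i).filter (fun j => j ∉ T) := by
      ext j; simp [Finset.mem_sdiff, Finset.mem_filter]
    rw [this]
    simp only [nsmul_eq_mul]
    ring
  have hTins : ∑ j ∈ (insert i T).erase i, (if j ∈ T then L else -L) = T.card * L := by
    rw [Finset.erase_insert hiT]
    rw [Finset.sum_congr rfl (fun j hj => if_pos hj), Finset.sum_const, nsmul_eq_mul]
  have hTsum : ∑ k ∈ insert i T, r k = ∑ k ∈ T, r k := by
    rw [Finset.sum_insert hiT, hr, zero_add]
  rw [hsplit, hTins, hTsum] at hopt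
  set a := ((B.erase i) ∩ T).card with ha
  set b := ((B.erase i) \ T).card with hb'
  have haT : a ≤ T.card := Finset.card_le_card Finset.inter_subset_right
  -- key inequality
  have hb1 : |∑ k ∈ B, r k| ≤ ∑ j, |r j| := HG_sum_abs_bound r B
  have hb2 : |∑ k ∈ T, r k| ≤ ∑ j, |r j| := HG_sum_abs_bound r T
  have habs1 : ∑ k ∈ B, r k ≤ ∑ j, |r j| := le_trans (le_abs_self _) hb1
  have habs2 : -(∑ j, |r j|) ≤ ∑ k ∈ T, r k := neg_le_of_abs_le hb2
  have hineq : ((T.card : ℝ) - a + b) * L ≤ L - 1 := by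
    have : ((T.card : ℝ) - a + b) * L = T.card * L - a * L + b * L := by ring
    rw [this]
    have hL1' : L - 1 = 2 * ∑ j, |r j| := by rw [hLdef]; ring
    rw [hL1']
    linarith
  have hm : T.card - a + b = 0 := by
    by_contra hne
    have hm1 : 1 ≤ T.card - a + b := Nat.one_le_iff_ne_zero.mpr hne
    have : (1:ℝ) ≤ ((T.card - a + b : ℕ) : ℝ) := by exact_mod_cast hm1
    have hcast : ((T.card - a + b : ℕ) : ℝ) = (T.card : ℝ) - a + b := by
      push_cast [Nat.cast_sub haT]; ring
    rw [hcast] at this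
    nlinarith
  have hae : a = T.card := by omega
  have hbe : b = 0 := by omega
  have hTsub : T ⊆ B.erase i := by
    have h1 : (B.erase i) ∩ T = T :=
      Finset.eq_of_subset_of_card_le Finset.inter_subset_right (le_of_eq hae.symm)
    rw [← h1]; exact Finset.inter_subset_left
  have hBsub : B.erase i ⊆ T := by
    have : (B.erase i) \ T = ∅ := Finset.card_eq_zero.mp hbe
    exact Finset.sdiff_eq_empty_iff_subset.mp this
  refine ⟨d, hZ, hdi, ?_⟩
  apply Finset.Subset.antisymm
  · intro j hj
    by_cases hji : j = i
    · simp [hji]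
    · exact Finset.mem_insert_of_mem (hBsub (Finset.mem_erase.mpr ⟨hji, hj⟩))
  · intro j hj
    rcases Finset.mem_insert.mp hj with h | h
    · subst h; exact hiB
    · exact (Finset.erase_subset i B) (hTsub h)

theorem optimal_implies_NOM_ASHG (n : ℕ)
    (M : (Fin n → Fin n → ℝ) → HGPartition n) (hM : OptimalA M) :
    NOM_A M := by
  intro i wi di hwi hdi
  set P : Finset (Fin n) := univ.filter (fun j => 0 < wi j) with hP
  set N : Finset (Fin n) := univ.filter (fun j => wi j < 0) with hN
  have hiP : i ∉ P := by simp [hP, hwi]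
  have hiN : i ∉ N := by simp [hN, hwi]
  -- upper bound on any utility
  have hub : ∀ C : Finset (Fin n), uA wi C ≤ ∑ j ∈ P, wi j := by
    intro C
    have h1 : uA wi C ≤ ∑ j ∈ C.filter (fun j => 0 < wi j), wi j := by
      unfold uA
      rw [← Finset.sum_filter_add_sum_filter_not C (fun j => 0 < wi j)]
      have : ∑ j ∈ C.filter (fun j => ¬ 0 < wi j), wi j ≤ 0 :=
        Finset.sum_nonpos fun j hj => le_of_not_gt (Finset.mem_filter.mp hj).2
      linarith
    refine le_trans h1 (Finset.sum_le_sum_of_subset_of_nonneg ?_ ?_)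
    · intro j hj
      simp only [hP, Finset.mem_filter, Finset.mem_univ, true_and]
      exact (Finset.mem_filter.mp hj).2
    · intro j hj _
      exact le_of_lt (Finset.mem_filter.mp hj).2
  -- lower bound on any utility
  have hlb : ∀ C : Finset (Fin n), ∑ j ∈ N, wi j ≤ uA wi C := by
    intro C
    have h1 : ∑ j ∈ C.filter (fun j => wi j < 0), wi j ≤ uA wi C := by
      unfold uA
      rw [← Finset.sum_filter_add_sum_filter_not C (fun j => wi j < 0)]
      have : 0 ≤ ∑ j ∈ C.filter (fun j => ¬ wi j < 0), wi j :=
        Finset.sum_nonneg fun j hj => le_of_not_gt (Finset.mem_filter.mp hj).2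
      linarith
    refine le_trans ?_ h1
    have hsub : C.filter (fun j => wi j < 0) ⊆ N := by
      intro j hj
      simp only [hN, Finset.mem_filter, Finset.mem_univ, true_and]
      exact (Finset.mem_filter.mp hj).2
    have := Finset.sum_sdiff hsub (f := wi)
    have hneg : ∑ j ∈ N \ C.filter (fun j => wi j < 0), wi j ≤ 0 :=
      Finset.sum_nonpos fun j hj => by
        have := Finset.mem_sdiff.mp hj
        have := Finset.mem_filter.mp ((hN ▸ this.1))
        exact le_of_lt this.2
    linarith
  -- nonemptiness
  have hne : ∀ r : Fin n → ℝ, r i = 0 → (utilSetA M i wi r).Nonempty := by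
    intro r hri
    refine ⟨_, (fun j => if j = i then r else 0), ?_, ?_, rfl⟩
    · intro j; by_cases h : j = i <;> simp [h, hri]
    · simp
  -- sup part
  obtain ⟨dP, hZP, hdiP, hblockP⟩ := HG_key M hM i wi hwi P hiP
  have hPmem : (∑ j ∈ P, wi j) ∈ utilSetA M i wi wi := by
    refine ⟨dP, hZP, hdiP, ?_⟩
    rw [hblockP]
    unfold uA
    rw [Finset.sum_insert hiP, hwi, zero_add]
  have hbddA : BddAbove (utilSetA M i wi wi) := by
    refine ⟨∑ j ∈ P, wi j, ?_⟩
    rintro x ⟨d, _, _, rfl⟩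
    exact hub _
  have hsup1 : sSup (utilSetA M i wi di) ≤ ∑ j ∈ P, wi j := by
    apply csSup_le (hne di hdi)
    rintro x ⟨d, _, _, rfl⟩
    exact hub _
  have hsup2 : (∑ j ∈ P, wi j) ≤ sSup (utilSetA M i wi wi) := le_csSup hbddA hPmem
  -- inf part
  obtain ⟨dN, hZN, hdiN, hblockN⟩ := HG_key M hM i di hdi N hiN
  have hNmem : (∑ j ∈ N, wi j) ∈ utilSetA M i wi di := by
    refine ⟨dN, hZN, hdiN, ?_⟩
    rw [hblockN]
    unfold uA
    rw [Finset.sum_insert hiN, hwi, zero_add]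
  have hbddB : BddBelow (utilSetA M i wi di) := by
    refine ⟨∑ j ∈ N, wi j, ?_⟩
    rintro x ⟨d, _, _, rfl⟩
    exact hlb _
  have hinf1 : sInf (utilSetA M i wi di) ≤ ∑ j ∈ N, wi j := csInf_le hbddB hNmem
  have hinf2 : (∑ j ∈ N, wi j) ≤ sInf (utilSetA M i wi wi) := by
    apply le_csInf (hne wi hwi)
    rintro x ⟨d, _, _, rfl⟩
    exact hlb _
  exact ⟨le_trans hsup1 hsup2, le_trans hinf1 hinf2⟩
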